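/- For every n ≥ 1, there is a bijection between permutations of length n avoiding the patterns 2431, 4231, 1432 and 4132, and code words of length n-1. -/

import Mathlib

def Contains {n k : ℕ} (τ : Equiv.Perm (Fin n)) (p : Fin k → ℕ) : Prop :=
  ∃ f : Fin k → Fin n, StrictMono f ∧ ∀ a b, p a < p b ↔ τ (f a) < τ (f b)

def AvoidsPat {n k : ℕ} (τ : Equiv.Perm (Fin n)) (p : Fin k → ℕ) : Prop := ¬ Contains τ p

/-- The alphabet for code words: `Sum.inl true` is the letter `B`, `Sum.inl false` is the
letter `E`, and `Sum.inr k` is the integer letter `k`. -/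
abbrev Letter := Bool ⊕ ℕ

def IsCodeWord {n : ℕ} (w : Fin n → Letter) : Prop :=
  (∀ i : Fin n, ∀ k : ℕ, w i = Sum.inr k → 2 ≤ k ∧ k ≤ (i : ℕ) + 1) ∧
  (∀ i j : Fin n, (j : ℕ) = (i : ℕ) + 1 → ∀ k : ℕ, w i = Sum.inr k →
    ∃ l : ℕ, w j = Sum.inr l ∧ k ≤ l)


open Equiv Finset

/-- interior position: has both a smaller and a larger element before it -/
def Intr {n : ℕ} (τ : Equiv.Perm (Fin n)) (k : Fin n) : Prop :=
  (∃ i, i < k ∧ τ i < τ k) ∧ (∃ j, j < k ∧ τ k < τ j)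

/-- structural avoidance condition -/
def Pc {n : ℕ} (τ : Equiv.Perm (Fin n)) : Prop :=
  ∀ k l : Fin n, k < l → Intr τ k → τ k < τ l

open Classical in
noncomputable def stat {n : ℕ} (τ : Equiv.Perm (Fin n)) : ℕ :=
  Finset.univ.sup fun k => if Intr τ k then (τ k : ℕ) + 1 else 0

open Classical in
lemma stat_le_iff {n : ℕ} {τ : Equiv.Perm (Fin n)} {X : ℕ} :
    stat τ ≤ X ↔ ∀ k, Intr τ k → (τ k : ℕ) < X := by
  rw [stat, Finset.sup_le_iff]
  constructor
  · intro h k hk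
    have := h k (mem_univ k)
    rw [if_pos hk] at this; omega
  · intro h k _
    split
    · have := h k ‹_›; omega
    · omega

open Classical in
lemma le_stat {n : ℕ} {τ : Equiv.Perm (Fin n)} {k : Fin n} (h : Intr τ k) :
    (τ k : ℕ) + 1 ≤ stat τ := by
  have := Finset.le_sup (f := fun k => if Intr τ k then (τ k : ℕ) + 1 else 0) (mem_univ k)
  rw [stat]
  simpa [h] using this

lemma stat_lt_self {m : ℕ} (τ : Equiv.Perm (Fin (m + 1))) : stat τ ≤ m := by
  rw [stat_le_iff]
  rintro k ⟨_, j, _, hj⟩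
  have := (τ j).isLt
  omega

lemma stat_ne_one {n : ℕ} (τ : Equiv.Perm (Fin n)) : stat τ ≠ 1 := by
  by_cases h : ∃ k, Intr τ k
  · obtain ⟨k, hk⟩ := h
    have h2 := le_stat hk
    obtain ⟨⟨i, _, hi⟩, _⟩ := hk
    have : (τ i : ℕ) < τ k := hi
    omega
  · push_neg at h
    have : stat τ ≤ 0 := stat_le_iff.2 fun k hk => absurd hk (h k)
    omega
open Equiv Finset

noncomputable def insFun {m : ℕ} (σ : Equiv.Perm (Fin (m + 1))) (v : Fin (m + 2)) :
    Fin (m + 2) → Fin (m + 2) :=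
  fun k => Fin.lastCases v (fun i => v.succAbove (σ i)) k

lemma insFun_last {m : ℕ} (σ : Equiv.Perm (Fin (m + 1))) (v : Fin (m + 2)) :
    insFun σ v (Fin.last (m + 1)) = v := Fin.lastCases_last

lemma insFun_castSucc {m : ℕ} (σ : Equiv.Perm (Fin (m + 1))) (v : Fin (m + 2)) (i : Fin (m + 1)) :
    insFun σ v i.castSucc = v.succAbove (σ i) := Fin.lastCases_castSucc i

lemma insFun_injective {m : ℕ} (σ : Equiv.Perm (Fin (m + 1))) (v : Fin (m + 2)) :
    Function.Injective (insFun σ v) := by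
  intro a b hab
  induction a using Fin.lastCases with
  | last => induction b using Fin.lastCases with
    | last => rfl
    | cast j =>
      rw [insFun_last, insFun_castSucc] at hab
      exact absurd hab.symm (Fin.succAbove_ne v (σ j))
  | cast i => induction b using Fin.lastCases with
    | last =>
      rw [insFun_last, insFun_castSucc] at hab
      exact absurd hab (Fin.succAbove_ne v (σ i))
    | cast j =>
      rw [insFun_castSucc, insFun_castSucc] at hab
      have := σ.injective (Fin.succAbove_right_injective hab)
      rw [this]

noncomputable def Ins {m : ℕ} (p : Equiv.Perm (Fin (m + 1)) × Fin (m + 2)) :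
    Equiv.Perm (Fin (m + 2)) :=
  Equiv.ofBijective (insFun p.1 p.2)
    (Finite.injective_iff_bijective.1 (insFun_injective p.1 p.2))

lemma Ins_last {m : ℕ} (σ : Equiv.Perm (Fin (m + 1))) (v : Fin (m + 2)) :
    Ins (σ, v) (Fin.last (m + 1)) = v := insFun_last σ v

lemma Ins_castSucc {m : ℕ} (σ : Equiv.Perm (Fin (m + 1))) (v : Fin (m + 2)) (i : Fin (m + 1)) :
    Ins (σ, v) i.castSucc = v.succAbove (σ i) := insFun_castSucc σ v i

lemma Ins_bijective {m : ℕ} : Function.Bijective (Ins (m := m)) := by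
  constructor
  · rintro ⟨σ, v⟩ ⟨σ', v'⟩ h
    have hv : v = v' := by
      have := congrArg (fun e => e (Fin.last (m+1))) h
      simpa [Ins_last] using this
    subst hv
    have hσ : σ = σ' := by
      ext i
      have := congrArg (fun e => e (Fin.castSucc i)) h
      simp only [Ins_castSucc] at this
      exact congrArg _ (Fin.succAbove_right_injective this)
    rw [hσ]
  · intro τ
    set v := τ (Fin.last (m + 1)) with hv
    have hne : ∀ i : Fin (m + 1), τ i.castSucc ≠ v := by
      intro i h
      have := τ.injective h
      exact absurd this (Fin.ne_last_of_lt (Fin.castSucc_lt_last i))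
    choose σ0 hσ0 using fun i => Fin.exists_succAbove_eq (hne i)
    have hσinj : Function.Injective σ0 := by
      intro a b hab
      have : τ a.castSucc = τ b.castSucc := by rw [← hσ0 a, ← hσ0 b, hab]
      have := τ.injective this
      exact Fin.castSucc_injective _ this
    refine ⟨(Equiv.ofBijective σ0 (Finite.injective_iff_bijective.1 hσinj), v), ?_⟩
    ext k
    induction k using Fin.lastCases with
    | last => rw [Ins_last]
    | cast i =>
      rw [Ins_castSucc]
      exact congrArg _ (hσ0 i)

section Trans
variable {m : ℕ} (σ : Equiv.Perm (Fin (m + 1))) (v : Fin (m + 2))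

lemma O1 (i j : Fin (m + 1)) : Ins (σ, v) i.castSucc < Ins (σ, v) j.castSucc ↔ σ i < σ j := by
  rw [Ins_castSucc, Ins_castSucc, Fin.succAbove_lt_succAbove_iff]

lemma O2 (i : Fin (m + 1)) : Ins (σ, v) i.castSucc < v ↔ (σ i : ℕ) < (v : ℕ) := by
  rw [Ins_castSucc, Fin.succAbove_lt_iff_castSucc_lt, Fin.lt_def, Fin.coe_castSucc]

lemma O3 (i : Fin (m + 1)) : v < Ins (σ, v) i.castSucc ↔ (v : ℕ) ≤ (σ i : ℕ) := by
  rw [Ins_castSucc, Fin.lt_succAbove_iff_le_castSucc, Fin.le_def, Fin.coe_castSucc]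

lemma T1 (k : Fin (m + 1)) : Intr (Ins (σ, v)) k.castSucc ↔ Intr σ k := by
  constructor
  · rintro ⟨⟨i, hik, hvi⟩, ⟨j, hjk, hvj⟩⟩
    obtain ⟨i', rfl⟩ := Fin.exists_castSucc_eq.2 (Fin.ne_last_of_lt hik)
    obtain ⟨j', rfl⟩ := Fin.exists_castSucc_eq.2 (Fin.ne_last_of_lt hjk)
    rw [Fin.castSucc_lt_castSucc_iff] at hik hjk
    rw [O1] at hvi hvj
    exact ⟨⟨i', hik, hvi⟩, ⟨j', hjk, hvj⟩⟩
  · rintro ⟨⟨i, hik, hvi⟩, ⟨j, hjk, hvj⟩⟩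
    refine ⟨⟨i.castSucc, ?_, ?_⟩, ⟨j.castSucc, ?_, ?_⟩⟩
    · rwa [Fin.castSucc_lt_castSucc_iff]
    · rwa [O1]
    · rwa [Fin.castSucc_lt_castSucc_iff]
    · rwa [O1]

lemma T2 : Intr (Ins (σ, v)) (Fin.last (m + 1)) ↔ 0 < (v : ℕ) ∧ (v : ℕ) < m + 1 := by
  constructor
  · rintro ⟨⟨i, hik, hvi⟩, ⟨j, hjk, hvj⟩⟩
    obtain ⟨i', rfl⟩ := Fin.exists_castSucc_eq.2 (Fin.ne_last_of_lt hik)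
    obtain ⟨j', rfl⟩ := Fin.exists_castSucc_eq.2 (Fin.ne_last_of_lt hjk)
    rw [Ins_last] at hvi hvj
    rw [O2] at hvi
    rw [O3] at hvj
    have := (σ j').isLt
    omega
  · rintro ⟨h0, h1⟩
    refine ⟨⟨(σ.symm 0).castSucc, Fin.castSucc_lt_last _, ?_⟩,
            ⟨(σ.symm (Fin.last m)).castSucc, Fin.castSucc_lt_last _, ?_⟩⟩
    · rw [Ins_last, O2, Equiv.apply_symm_apply]
      simpa using h0
    · rw [Ins_last, O3, Equiv.apply_symm_apply]
      simp [Fin.last]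
      omega

lemma T3 : Pc (Ins (σ, v)) ↔ Pc σ ∧ stat σ ≤ (v : ℕ) := by
  constructor
  · intro h
    constructor
    · intro k l hkl hintr
      rw [← O1 σ v]
      exact h _ _ (by rwa [Fin.castSucc_lt_castSucc_iff]) ((T1 σ v k).2 hintr)
    · rw [stat_le_iff]
      intro k hk
      have hh := h _ _ (Fin.castSucc_lt_last k) ((T1 σ v k).2 hk)
      rw [Ins_last] at hh
      exact (O2 σ v k).1 hh
  · rintro ⟨hP, hs⟩
    intro k l hkl hintr
    obtain ⟨k', rfl⟩ := Fin.exists_castSucc_eq.2 (Fin.ne_last_of_lt hkl)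
    rw [T1] at hintr
    induction l using Fin.lastCases with
    | last =>
      rw [Ins_last, O2]
      exact stat_le_iff.1 hs k' hintr
    | cast l' =>
      rw [O1]
      exact hP _ _ (by rwa [Fin.castSucc_lt_castSucc_iff] at hkl) hintr

lemma T4 (h : Pc (Ins (σ, v))) :
    stat (Ins (σ, v)) = if 0 < (v : ℕ) ∧ (v : ℕ) < m + 1 then (v : ℕ) + 1 else stat σ := by
  obtain ⟨hP, hs⟩ := (T3 σ v).1 h
  have hval : ∀ k : Fin (m + 1), Intr σ k → (Ins (σ, v) k.castSucc : ℕ) = (σ k : ℕ) := by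
    intro k hk
    have hlt : (σ k : ℕ) < (v : ℕ) := stat_le_iff.1 hs k hk
    rw [Ins_castSucc, Fin.succAbove_of_castSucc_lt _ _ (by
      rw [Fin.lt_def, Fin.coe_castSucc]; exact hlt), Fin.coe_castSucc]
  split
  · rename_i hcond
    apply le_antisymm
    · rw [stat_le_iff]
      intro k hk
      induction k using Fin.lastCases with
      | last => rw [Ins_last]; omega
      | cast k' =>
        rw [T1] at hk
        rw [hval k' hk]
        have := stat_le_iff.1 hs k' hk
        omega
    · have : Intr (Ins (σ, v)) (Fin.last (m + 1)) := (T2 σ v).2 hcond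
      have := le_stat this
      rwa [Ins_last] at this
  · rename_i hcond
    apply le_antisymm
    · rw [stat_le_iff]
      intro k hk
      induction k using Fin.lastCases with
      | last => exact absurd ((T2 σ v).1 hk) hcond
      | cast k' =>
        rw [T1] at hk
        rw [hval k' hk]
        have := le_stat hk
        omega
    · rw [stat_le_iff]
      intro k hk
      have h1 := le_stat ((T1 σ v k).2 hk)
      rw [hval k hk] at h1
      omega


lemma strictMono_vec4 {n : ℕ} {a b c d : Fin n} (h1 : a < b) (h2 : b < c) (h3 : c < d) :
    StrictMono ![a, b, c, d] := by
  intro x y hxy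
  fin_cases x <;> fin_cases y <;>
    first
      | exact absurd hxy (by decide)
      | exact h1 | exact h2 | exact h3
      | exact h1.trans h2 | exact h2.trans h3 | exact (h1.trans h2).trans h3

lemma mono4 {p0 p1 p2 p3 q0 q1 q2 q3 : ℕ}
    (h01 : p0 < p1 ↔ q0 < q1) (h10 : p1 < p0 ↔ q1 < q0)
    (h02 : p0 < p2 ↔ q0 < q2) (h20 : p2 < p0 ↔ q2 < q0)
    (h03 : p0 < p3 ↔ q0 < q3) (h30 : p3 < p0 ↔ q3 < q0)
    (h12 : p1 < p2 ↔ q1 < q2) (h21 : p2 < p1 ↔ q2 < q1)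
    (h13 : p1 < p3 ↔ q1 < q3) (h31 : p3 < p1 ↔ q3 < q1)
    (h23 : p2 < p3 ↔ q2 < q3) (h32 : p3 < p2 ↔ q3 < q2) :
    ∀ x y : Fin 4, (![p0,p1,p2,p3] : Fin 4 → ℕ) x < ![p0,p1,p2,p3] y ↔
      (![q0,q1,q2,q3] : Fin 4 → ℕ) x < ![q0,q1,q2,q3] y := by
  intro x y
  fin_cases x <;> fin_cases y <;>
    simp only [show ∀ h, (⟨0,h⟩ : Fin 4) = 0 from fun _ => rfl,
      show ∀ h, (⟨1,h⟩ : Fin 4) = 1 from fun _ => rfl,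
      show ∀ h, (⟨2,h⟩ : Fin 4) = 2 from fun _ => rfl,
      show ∀ h, (⟨3,h⟩ : Fin 4) = 3 from fun _ => rfl,
      show (![p0,p1,p2,p3] : Fin 4 → ℕ) 0 = p0 from rfl,
      show (![p0,p1,p2,p3] : Fin 4 → ℕ) 1 = p1 from rfl,
      show (![p0,p1,p2,p3] : Fin 4 → ℕ) 2 = p2 from rfl,
      show (![p0,p1,p2,p3] : Fin 4 → ℕ) 3 = p3 from rfl,
      show (![q0,q1,q2,q3] : Fin 4 → ℕ) 0 = q0 from rfl,
      show (![q0,q1,q2,q3] : Fin 4 → ℕ) 1 = q1 from rfl,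
      show (![q0,q1,q2,q3] : Fin 4 → ℕ) 2 = q2 from rfl,
      show (![q0,q1,q2,q3] : Fin 4 → ℕ) 3 = q3 from rfl] <;>
    first
      | exact h01 | exact h10 | exact h02 | exact h20 | exact h03 | exact h30
      | exact h12 | exact h21 | exact h13 | exact h31 | exact h23 | exact h32
      | simp [lt_self_iff_false]

lemma contains_of_rel {n : ℕ} (τ : Equiv.Perm (Fin n)) {i j k l : Fin n}
    (hab : i < j) (hbc : j < k) (hcd : k < l) (p0 p1 p2 p3 : ℕ)
    (H : ∀ x y : Fin 4, (![p0,p1,p2,p3] : Fin 4 → ℕ) x < ![p0,p1,p2,p3] y ↔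
      (![(τ i : ℕ), τ j, τ k, τ l] : Fin 4 → ℕ) x < ![(τ i : ℕ), τ j, τ k, τ l] y) :
    Contains τ ![p0,p1,p2,p3] := by
  have e : ∀ x : Fin 4, (τ (![i,j,k,l] x) : ℕ) = ![(τ i : ℕ), τ j, τ k, τ l] x := by
    intro x; fin_cases x <;> rfl
  refine ⟨![i,j,k,l], strictMono_vec4 hab hbc hcd, fun a b => ?_⟩
  rw [H a b, Fin.lt_def, e a, e b]

lemma pc_avoids {n : ℕ} {τ : Equiv.Perm (Fin n)} (h : Pc τ) (p : Fin 4 → ℕ)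
    (h2 : p 2 = 3) (h3 : p 3 < 3)
    (h01 : (p 0 < 3 ∧ 3 < p 1) ∨ (p 1 < 3 ∧ 3 < p 0)) : AvoidsPat τ p := by
  rintro ⟨f, hf, hrel⟩
  have hintr : Intr τ (f 2) := by
    rcases h01 with ⟨ha, hb⟩ | ⟨ha, hb⟩
    · exact ⟨⟨f 0, hf (by decide), (hrel 0 2).1 (by omega)⟩,
        ⟨f 1, hf (by decide), (hrel 2 1).1 (by omega)⟩⟩
    · exact ⟨⟨f 1, hf (by decide), (hrel 1 2).1 (by omega)⟩,
        ⟨f 0, hf (by decide), (hrel 2 0).1 (by omega)⟩⟩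
  have hc := h (f 2) (f 3) (hf (by decide)) hintr
  have hd := (hrel 3 2).1 (by omega)
  exact absurd hc (asymm hd)

lemma avoids_iff_pc {n : ℕ} (τ : Equiv.Perm (Fin n)) :
    (AvoidsPat τ ![2,4,3,1] ∧ AvoidsPat τ ![4,2,3,1] ∧
     AvoidsPat τ ![1,4,3,2] ∧ AvoidsPat τ ![4,1,3,2]) ↔ Pc τ := by
  constructor
  · rintro ⟨a1, a2, a3, a4⟩
    by_contra hnp
    unfold Pc at hnp
    push_neg at hnp
    obtain ⟨k, l, hkl, hintr, hnlt⟩ := hnp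
    have hlk : τ l < τ k :=
      lt_of_le_of_ne hnlt (fun h => (ne_of_lt hkl) (τ.injective h).symm)
    obtain ⟨⟨i, hik, hvik⟩, ⟨j, hjk, hvkj⟩⟩ := hintr
    have hij : i ≠ j := fun h => absurd (h ▸ hvik) (asymm hvkj)
    have hil : τ i ≠ τ l := fun h =>
      absurd (τ.injective h) (ne_of_lt (hik.trans hkl))
    have nik : (τ i : ℕ) < τ k := hvik
    have nkj : (τ k : ℕ) < τ j := hvkj
    have nlk : (τ l : ℕ) < τ k := hlk
    rcases lt_or_gt_of_ne hij with hij' | hij' <;>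
      rcases lt_or_gt_of_ne hil with hil' | hil'
    · -- i < j, τ i < τ l : pattern 1432 at (i,j,k,l)
      have nil : (τ i : ℕ) < τ l := hil'
      exact a3 (contains_of_rel τ hij' hjk hkl 1 4 3 2
        (mono4 (by omega) (by omega) (by omega) (by omega) (by omega) (by omega)
          (by omega) (by omega) (by omega) (by omega) (by omega) (by omega)))
    · -- i < j, τ l < τ i : pattern 2431 at (i,j,k,l)
      have nli : (τ l : ℕ) < τ i := hil'
      exact a1 (contains_of_rel τ hij' hjk hkl 2 4 3 1
        (mono4 (by omega) (by omega) (by omega) (by omega) (by omega) (by omega)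
          (by omega) (by omega) (by omega) (by omega) (by omega) (by omega)))
    · -- j < i, τ i < τ l : pattern 4132 at (j,i,k,l)
      have nil : (τ i : ℕ) < τ l := hil'
      exact a4 (contains_of_rel τ hij' hik hkl 4 1 3 2
        (mono4 (by omega) (by omega) (by omega) (by omega) (by omega) (by omega)
          (by omega) (by omega) (by omega) (by omega) (by omega) (by omega)))
    · -- j < i, τ l < τ i : pattern 4231 at (j,i,k,l)
      have nli : (τ l : ℕ) < τ i := hil'
      exact a2 (contains_of_rel τ hij' hik hkl 4 2 3 1
        (mono4 (by omega) (by omega) (by omega) (by omega) (by omega) (by omega)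
          (by omega) (by omega) (by omega) (by omega) (by omega) (by omega)))
  · intro h
    exact ⟨pc_avoids h _ rfl (by decide) (by norm_num),
      pc_avoids h _ rfl (by decide) (by norm_num),
      pc_avoids h _ rfl (by decide) (by norm_num),
      pc_avoids h _ rfl (by decide) (by norm_num)⟩


def letSt (x : Letter) : ℕ := match x with | .inl _ => 0 | .inr k => k

def lastSt {m : ℕ} (w : Fin m → Letter) : ℕ :=
  if h : 0 < m then letSt (w ⟨m - 1, by omega⟩) else 0

lemma lastSt_zero (w : Fin 0 → Letter) : lastSt w = 0 := rfl

lemma lastSt_succ {m : ℕ} (w : Fin (m + 1) → Letter) : lastSt w = letSt (w (Fin.last m)) := by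
  rw [lastSt, dif_pos (Nat.succ_pos m)]
  rfl

lemma lastSt_snoc {m : ℕ} (w : Fin m → Letter) (x : Letter) :
    lastSt (Fin.snoc w x) = letSt x := by
  rw [lastSt_succ, Fin.snoc_last]

/-- the compatibility condition for appending a letter -/
def Ok {m : ℕ} (w : Fin m → Letter) (x : Letter) : Prop :=
  (∀ k, x = Sum.inr k → 2 ≤ k ∧ lastSt w ≤ k ∧ k ≤ m + 1) ∧
  (∀ b, x = Sum.inl b → lastSt w = 0)

lemma isCodeWord_snoc {m : ℕ} (w : Fin m → Letter) (x : Letter) :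
    IsCodeWord (Fin.snoc w x) ↔ IsCodeWord w ∧ Ok w x := by
  constructor
  · intro H
    have Hw : IsCodeWord w := by
      constructor
      · intro i k hk
        have := H.1 i.castSucc k (by rwa [Fin.snoc_castSucc])
        simpa using this
      · intro i j hji k hk
        have := H.2 i.castSucc j.castSucc (by simpa using hji) k (by rwa [Fin.snoc_castSucc])
        simpa using this
    refine ⟨Hw, ?_, ?_⟩
    · intro k hk
      have h1 := H.1 (Fin.last m) k (by rwa [Fin.snoc_last])
      simp only [Fin.val_last] at h1
      refine ⟨h1.1, ?_, h1.2⟩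
      rcases Nat.eq_zero_or_pos m with rfl | hm
      · rw [lastSt_zero]; omega
      · obtain ⟨m', rfl⟩ := Nat.exists_eq_succ_of_ne_zero (Nat.pos_iff_ne_zero.1 hm)
        rw [lastSt_succ]
        cases hw : w (Fin.last m') with
        | inl b => simp [letSt]
        | inr k' =>
          have := H.2 (Fin.last m').castSucc (Fin.last (m' + 1))
            (by simp) k' (by rwa [Fin.snoc_castSucc])
          obtain ⟨l, hl, hkl⟩ := this
          rw [Fin.snoc_last, hk] at hl
          cases hl
          simpa [letSt] using hkl
    · intro b hb
      rcases Nat.eq_zero_or_pos m with rfl | hm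
      · rw [lastSt_zero]
      · obtain ⟨m', rfl⟩ := Nat.exists_eq_succ_of_ne_zero (Nat.pos_iff_ne_zero.1 hm)
        rw [lastSt_succ]
        cases hw : w (Fin.last m') with
        | inl b' => simp [letSt]
        | inr k' =>
          have := H.2 (Fin.last m').castSucc (Fin.last (m' + 1))
            (by simp) k' (by rwa [Fin.snoc_castSucc])
          obtain ⟨l, hl, _⟩ := this
          rw [Fin.snoc_last, hb] at hl
          cases hl
  · rintro ⟨Hw, Hok⟩
    constructor
    · intro i k hk
      induction i using Fin.lastCases with
      | last =>
        rw [Fin.snoc_last] at hk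
        have := (Hok.1 k hk)
        simp only [Fin.val_last]
        omega
      | cast i' =>
        rw [Fin.snoc_castSucc] at hk
        have := Hw.1 i' k hk
        simpa using this
    · intro i j hji k hk
      induction j using Fin.lastCases with
      | last =>
        simp only [Fin.val_last] at hji
        obtain ⟨m', rfl⟩ : ∃ m', m = m' + 1 := by
          cases m with
          | zero => omega
          | succ m' => exact ⟨m', rfl⟩
        have him : (i : ℕ) = m' := by omega
        obtain ⟨i', rfl⟩ := Fin.exists_castSucc_eq.2
          (by intro h; rw [h] at him; simp at him : i ≠ Fin.last (m' + 1))
        have hi' : i' = Fin.last m' := by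
          apply Fin.ext
          simpa using him
        subst hi'
        rw [Fin.snoc_castSucc] at hk
        have hst : lastSt w = k := by rw [lastSt_succ, hk]; rfl
        have hk2 : 2 ≤ k := (Hw.1 (Fin.last m') k hk).1
        cases hx : x with
        | inl b =>
          have := Hok.2 b hx
          omega
        | inr l =>
          have := Hok.1 l hx
          exact ⟨l, by rw [Fin.snoc_last], by omega⟩
      | cast j' =>
        have hjm : (j' : ℕ) < m := j'.isLt
        simp only [Fin.coe_castSucc] at hji
        obtain ⟨i', rfl⟩ := Fin.exists_castSucc_eq.2
          (by intro h; rw [h] at hji; simp [Fin.last] at hji; omega : i ≠ Fin.last m)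
        rw [Fin.snoc_castSucc] at hk
        have := Hw.2 i' j' (by simpa using hji) k hk
        obtain ⟨l, hl, hkl⟩ := this
        exact ⟨l, by rwa [Fin.snoc_castSucc], hkl⟩

instance cwFinite {m : ℕ} : Finite {w : Fin m → Letter // IsCodeWord w} := by
  apply Finite.of_injective (β := Fin m → Bool ⊕ Fin (m + 2))
    (fun w i => Sum.map id (fun k => (⟨min k (m + 1), by omega⟩ : Fin (m + 2))) (w.1 i))
  intro w w' hww
  apply Subtype.ext
  funext i
  have h := congrFun hww i
  simp only at h
  cases hw : w.1 i with
  | inl b => cases hw' : w'.1 i with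
    | inl b' => rw [hw, hw'] at h; simp at h; rw [h]
    | inr k' => rw [hw, hw'] at h; simp at h
  | inr k => cases hw' : w'.1 i with
    | inl b' => rw [hw, hw'] at h; simp at h
    | inr k' =>
      rw [hw, hw'] at h
      simp only [Sum.map_inr, Sum.inr.injEq, Fin.mk.injEq] at h
      have b1 := (w.2.1 i k hw).2
      have b2 := (w'.2.1 i k' hw').2
      have hi := i.isLt
      congr 1
      omega


lemma natCard_or {α : Type*} (p q r : α → Prop) [Finite {a // q a}] [Finite {a // r a}]
    (h : ∀ a, p a ↔ q a ∨ r a) (hd : ∀ a, ¬(q a ∧ r a)) :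
    Nat.card {a // p a} = Nat.card {a // q a} + Nat.card {a // r a} := by
  classical
  have hdis : Disjoint q r := by
    rw [Pi.disjoint_iff]
    intro a
    rw [Prop.disjoint_iff]
    exact hd a
  rw [← Nat.card_sum]
  exact Nat.card_congr ((Equiv.subtypeEquivRight h).trans (subtypeOrEquiv q r hdis))

lemma natCard_fix_snd {α β : Type*} (p : α × β → Prop) (p' : α → Prop) (b₀ : β)
    (h : ∀ x : α × β, p x ↔ p' x.1 ∧ x.2 = b₀) :
    Nat.card {x : α × β // p x} = Nat.card {a : α // p' a} :=
  Nat.card_congr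
    ⟨fun x => ⟨x.1.1, ((h x.1).1 x.2).1⟩,
     fun a => ⟨(a.1, b₀), (h (a.1, b₀)).2 ⟨a.2, rfl⟩⟩,
     by rintro ⟨⟨a, b⟩, hx⟩; have := ((h _).1 hx).2; simp only at this; subst this; rfl,
     by rintro ⟨a, ha⟩; rfl⟩

section Counting

instance cwFinite2 {m : ℕ} (q : (Fin m → Letter) → Prop) :
    Finite {w : Fin m → Letter // IsCodeWord w ∧ q w} :=
  Finite.of_injective (β := {w : Fin m → Letter // IsCodeWord w})
    (fun w => ⟨w.1, w.2.1⟩) (by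
      intro a b h
      have := congrArg Subtype.val h
      exact Subtype.ext this)

lemma cwPairFinite {m : ℕ} (p : (Fin m → Letter) → Prop)
    (hp : ∀ w, p w → IsCodeWord w) (c : Letter) :
    Finite {x : (Fin m → Letter) × Letter // p x.1 ∧ x.2 = c} :=
  Finite.of_injective (β := {w : Fin m → Letter // IsCodeWord w})
    (fun x => ⟨x.1.1, hp _ x.2.1⟩) (by
      intro x y h
      have h1 : x.1.1 = y.1.1 := congrArg Subtype.val h
      apply Subtype.ext
      apply Prod.ext h1
      rw [x.2.2, y.2.2])

noncomputable def NA (m M : ℕ) : ℕ :=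
  Nat.card {τ : Equiv.Perm (Fin (m + 1)) // Pc τ ∧ stat τ = M}

noncomputable def CNA (m X : ℕ) : ℕ :=
  Nat.card {τ : Equiv.Perm (Fin (m + 1)) // Pc τ ∧ stat τ ≤ X}

noncomputable def NC (m M : ℕ) : ℕ :=
  Nat.card {w : Fin m → Letter // IsCodeWord w ∧ lastSt w = M}

noncomputable def CNC (m X : ℕ) : ℕ :=
  Nat.card {w : Fin m → Letter // IsCodeWord w ∧ lastSt w ≤ X}

lemma cna_zero (m : ℕ) : CNA m 0 = NA m 0 :=
  Nat.card_congr (Equiv.subtypeEquivRight fun τ => by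
    constructor
    · rintro ⟨h1, h2⟩; exact ⟨h1, by omega⟩
    · rintro ⟨h1, h2⟩; exact ⟨h1, by omega⟩)

lemma cnc_zero (m : ℕ) : CNC m 0 = NC m 0 :=
  Nat.card_congr (Equiv.subtypeEquivRight fun w => by
    constructor
    · rintro ⟨h1, h2⟩; exact ⟨h1, by omega⟩
    · rintro ⟨h1, h2⟩; exact ⟨h1, by omega⟩)

lemma cna_succ (m X : ℕ) : CNA m (X + 1) = CNA m X + NA m (X + 1) :=
  natCard_or _ _ _
    (fun τ => by
      constructor
      · rintro ⟨h1, h2⟩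
        rcases eq_or_lt_of_le h2 with h | h
        · exact Or.inr ⟨h1, h⟩
        · exact Or.inl ⟨h1, by omega⟩
      · rintro (⟨h1, h2⟩ | ⟨h1, h2⟩)
        · exact ⟨h1, by omega⟩
        · exact ⟨h1, by omega⟩)
    (fun τ => by rintro ⟨⟨_, h1⟩, ⟨_, h2⟩⟩; omega)

lemma cnc_succ (m X : ℕ) : CNC m (X + 1) = CNC m X + NC m (X + 1) :=
  natCard_or _ _ _
    (fun w => by
      constructor
      · rintro ⟨h1, h2⟩
        rcases eq_or_lt_of_le h2 with h | h
        · exact Or.inr ⟨h1, h⟩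
        · exact Or.inl ⟨h1, by omega⟩
      · rintro (⟨h1, h2⟩ | ⟨h1, h2⟩)
        · exact ⟨h1, by omega⟩
        · exact ⟨h1, by omega⟩)
    (fun w => by rintro ⟨⟨_, h1⟩, ⟨_, h2⟩⟩; omega)

lemma na_one (m : ℕ) : NA m 1 = 0 :=
  @Nat.card_of_isEmpty _ ⟨fun x => stat_ne_one x.1 x.2.2⟩

lemma na_big (m M : ℕ) (h : m < M) : NA m M = 0 :=
  @Nat.card_of_isEmpty _ ⟨fun x => by have := stat_lt_self x.1; omega⟩

lemma nc_state {m : ℕ} (w : Fin m → Letter) (h : IsCodeWord w) :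
    lastSt w = 0 ∨ (2 ≤ lastSt w ∧ lastSt w ≤ m) := by
  cases m with
  | zero => exact Or.inl (lastSt_zero w)
  | succ m' =>
    rw [lastSt_succ]
    cases hw : w (Fin.last m') with
    | inl b => exact Or.inl rfl
    | inr k =>
      have := h.1 (Fin.last m') k hw
      simp only [Fin.val_last] at this
      exact Or.inr (by simpa [letSt] using this)

lemma nc_one (m : ℕ) : NC m 1 = 0 :=
  @Nat.card_of_isEmpty _ ⟨fun x => by
    have := nc_state x.1 x.2.1
    have := x.2.2
    omega⟩

lemma nc_big (m M : ℕ) (h : m < M) : NC m M = 0 :=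
  @Nat.card_of_isEmpty _ ⟨fun x => by
    have := nc_state x.1 x.2.1
    have := x.2.2
    omega⟩

/-- transport the permutation count through the insertion bijection -/
lemma na_pairs (m M : ℕ) : NA (m + 1) M =
    Nat.card {x : Equiv.Perm (Fin (m + 1)) × Fin (m + 2) //
      Pc (Ins x) ∧ stat (Ins x) = M} :=
  (Nat.card_congr (Equiv.subtypeEquiv (Equiv.ofBijective Ins Ins_bijective)
    (fun _ => Iff.rfl))).symm

lemma na_step_zero (m : ℕ) : NA (m + 1) 0 = 2 * NA m 0 := by
  rw [na_pairs]
  have key : ∀ x : Equiv.Perm (Fin (m + 1)) × Fin (m + 2),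
      (Pc (Ins x) ∧ stat (Ins x) = 0) ↔
      ((Pc x.1 ∧ stat x.1 = 0) ∧ x.2 = (0 : Fin (m + 2))) ∨
      ((Pc x.1 ∧ stat x.1 = 0) ∧ x.2 = Fin.last (m + 1)) := by
    rintro ⟨σ, v⟩
    dsimp only
    constructor
    · rintro ⟨h1, h2⟩
      obtain ⟨hP, hs⟩ := (T3 σ v).1 h1
      rw [T4 σ v h1] at h2
      split at h2
      · omega
      · rename_i hcond
        have hv := v.isLt
        have : (v : ℕ) = 0 ∨ (v : ℕ) = m + 1 := by omega
        rcases this with h | h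
        · exact Or.inl ⟨⟨hP, h2⟩, Fin.ext h⟩
        · exact Or.inr ⟨⟨hP, h2⟩, Fin.ext (by simpa using h)⟩
    · rintro (⟨⟨hP, hs⟩, rfl⟩ | ⟨⟨hP, hs⟩, rfl⟩)
      · have h1 : Pc (Ins (σ, (0 : Fin (m + 2)))) := (T3 σ 0).2 ⟨hP, hs.le.trans (Nat.zero_le _)⟩
        refine ⟨h1, ?_⟩
        rw [T4 σ _ h1, if_neg (by simp)]
        exact hs
      · have h1 : Pc (Ins (σ, Fin.last (m + 1))) :=
          (T3 σ _).2 ⟨hP, by simp [Fin.last]; omega⟩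
        refine ⟨h1, ?_⟩
        rw [T4 σ _ h1, if_neg (by simp [Fin.last])]
        exact hs
  rw [natCard_or _ _ _ key (by
    rintro ⟨σ, v⟩ ⟨⟨_, h1⟩, ⟨_, h2⟩⟩
    rw [h1] at h2
    have := congrArg Fin.val h2
    simp [Fin.last] at this)]
  rw [natCard_fix_snd _ (fun σ => Pc σ ∧ stat σ = 0) _ (fun x => Iff.rfl),
    natCard_fix_snd _ (fun σ => Pc σ ∧ stat σ = 0) _ (fun x => Iff.rfl)]
  show NA m 0 + NA m 0 = 2 * NA m 0
  omega

lemma na_step_two (m M : ℕ) (h2 : 2 ≤ M) (hm : M ≤ m + 1) :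
    NA (m + 1) M = CNA m (M - 1) + NA m M := by
  rw [na_pairs]
  have key : ∀ x : Equiv.Perm (Fin (m + 1)) × Fin (m + 2),
      (Pc (Ins x) ∧ stat (Ins x) = M) ↔
      ((Pc x.1 ∧ stat x.1 ≤ M - 1) ∧ x.2 = (⟨M - 1, by omega⟩ : Fin (m + 2))) ∨
      ((Pc x.1 ∧ stat x.1 = M) ∧ x.2 = Fin.last (m + 1)) := by
    rintro ⟨σ, v⟩
    dsimp only
    constructor
    · rintro ⟨h1, hstat⟩
      obtain ⟨hP, hs⟩ := (T3 σ v).1 h1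
      rw [T4 σ v h1] at hstat
      split at hstat
      · rename_i hcond
        exact Or.inl ⟨⟨hP, by omega⟩, Fin.ext (show (v : ℕ) = M - 1 by omega)⟩
      · rename_i hcond
        have hv := v.isLt
        have : (v : ℕ) = 0 ∨ (v : ℕ) = m + 1 := by omega
        rcases this with h | h
        · omega
        · exact Or.inr ⟨⟨hP, hstat⟩, Fin.ext (by simpa using h)⟩
    · rintro (⟨⟨hP, hs⟩, rfl⟩ | ⟨⟨hP, hs⟩, rfl⟩)
      · have h1 : Pc (Ins (σ, (⟨M - 1, by omega⟩ : Fin (m + 2)))) :=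
          (T3 σ _).2 ⟨hP, by simpa using hs⟩
        refine ⟨h1, ?_⟩
        rw [T4 σ _ h1, if_pos (by simp; omega)]
        simp
        omega
      · have hb := stat_lt_self σ
        have h1 : Pc (Ins (σ, Fin.last (m + 1))) :=
          (T3 σ _).2 ⟨hP, by simp [Fin.last]; omega⟩
        refine ⟨h1, ?_⟩
        rw [T4 σ _ h1, if_neg (by simp [Fin.last])]
        exact hs
  rw [natCard_or _ _ _ key (by
    rintro ⟨σ, v⟩ ⟨⟨_, h1⟩, ⟨_, h2'⟩⟩
    rw [h1] at h2'
    have := congrArg Fin.val h2'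
    simp [Fin.last] at this
    omega)]
  rw [natCard_fix_snd _ (fun σ => Pc σ ∧ stat σ ≤ M - 1) _ (fun x => Iff.rfl),
    natCard_fix_snd _ (fun σ => Pc σ ∧ stat σ = M) _ (fun x => Iff.rfl)]
  rfl

/-- snoc as an equivalence -/
def snocE (m : ℕ) : (Fin m → Letter) × Letter ≃ (Fin (m + 1) → Letter) where
  toFun x := Fin.snoc x.1 x.2
  invFun w := (Fin.init w, w (Fin.last m))
  left_inv x := by
    ext <;> simp [Fin.init_snoc, Fin.snoc_last]
  right_inv w := Fin.snoc_init_self w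

lemma nc_pairs (m M : ℕ) : NC (m + 1) M =
    Nat.card {x : (Fin m → Letter) × Letter //
      (IsCodeWord x.1 ∧ Ok x.1 x.2) ∧ letSt x.2 = M} :=
  (Nat.card_congr (Equiv.subtypeEquiv (snocE m)
    (fun x => by
      show (IsCodeWord x.1 ∧ Ok x.1 x.2) ∧ letSt x.2 = M ↔ _
      rw [show (snocE m) x = Fin.snoc x.1 x.2 from rfl, isCodeWord_snoc, lastSt_snoc]))).symm

lemma nc_step_zero (m : ℕ) : NC (m + 1) 0 = 2 * NC m 0 := by
  rw [nc_pairs]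
  have key : ∀ x : (Fin m → Letter) × Letter,
      ((IsCodeWord x.1 ∧ Ok x.1 x.2) ∧ letSt x.2 = 0) ↔
      ((IsCodeWord x.1 ∧ lastSt x.1 = 0) ∧ x.2 = Sum.inl true) ∨
      ((IsCodeWord x.1 ∧ lastSt x.1 = 0) ∧ x.2 = Sum.inl false) := by
    rintro ⟨w, x⟩
    dsimp only
    constructor
    · rintro ⟨⟨hw, hok⟩, hst⟩
      cases hx : x with
      | inl b =>
        have h0 := hok.2 b hx
        cases b
        · exact Or.inr ⟨⟨hw, h0⟩, rfl⟩
        · exact Or.inl ⟨⟨hw, h0⟩, rfl⟩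
      | inr k =>
        rw [hx] at hst
        have := (hok.1 k hx).1
        simp [letSt] at hst
        omega
    · rintro (⟨⟨hw, h0⟩, rfl⟩ | ⟨⟨hw, h0⟩, rfl⟩) <;>
        exact ⟨⟨hw, fun k hk => by simp at hk, fun b _ => h0⟩, rfl⟩
  haveI := cwPairFinite (m := m) (fun w => IsCodeWord w ∧ lastSt w = 0)
    (fun _ h => h.1) (Sum.inl true)
  haveI := cwPairFinite (m := m) (fun w => IsCodeWord w ∧ lastSt w = 0)
    (fun _ h => h.1) (Sum.inl false)
  rw [natCard_or _ _ _ key (by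
    rintro ⟨w, x⟩ ⟨⟨_, h1⟩, ⟨_, h2⟩⟩
    rw [h1] at h2
    simp at h2)]
  rw [natCard_fix_snd _ (fun w => IsCodeWord w ∧ lastSt w = 0) _ (fun x => Iff.rfl),
    natCard_fix_snd _ (fun w => IsCodeWord w ∧ lastSt w = 0) _ (fun x => Iff.rfl)]
  show NC m 0 + NC m 0 = 2 * NC m 0
  omega

lemma nc_step_two (m M : ℕ) (h2 : 2 ≤ M) (hm : M ≤ m + 1) :
    NC (m + 1) M = CNC m M := by
  rw [nc_pairs]
  have key : ∀ x : (Fin m → Letter) × Letter,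
      ((IsCodeWord x.1 ∧ Ok x.1 x.2) ∧ letSt x.2 = M) ↔
      ((IsCodeWord x.1 ∧ lastSt x.1 ≤ M) ∧ x.2 = Sum.inr M) := by
    rintro ⟨w, x⟩
    dsimp only
    constructor
    · rintro ⟨⟨hw, hok⟩, hst⟩
      cases hx : x with
      | inl b =>
        rw [hx] at hst
        simp [letSt] at hst
        omega
      | inr k =>
        rw [hx] at hst
        simp [letSt] at hst
        subst hst
        exact ⟨⟨hw, (hok.1 k hx).2.1⟩, rfl⟩
    · rintro ⟨⟨hw, hle⟩, rfl⟩
      exact ⟨⟨hw, fun k hk => by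
        simp at hk
        subst hk
        exact ⟨h2, hle, hm⟩, fun b hb => by simp at hb⟩, rfl⟩
  rw [natCard_fix_snd _ (fun w => IsCodeWord w ∧ lastSt w ≤ M) (Sum.inr M) key]
  rfl

end Counting

lemma pc_base (τ : Equiv.Perm (Fin 1)) : Pc τ := by
  intro k l hkl _
  have : k = l := Subsingleton.elim k l
  rw [this] at hkl
  exact absurd hkl (lt_irrefl l)

lemma stat_base (τ : Equiv.Perm (Fin 1)) : stat τ = 0 := by
  have h : stat τ ≤ 0 := by
    rw [stat_le_iff]
    rintro k ⟨⟨i, hik, _⟩, _⟩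
    have : i = k := Subsingleton.elim i k
    rw [this] at hik
    exact absurd hik (lt_irrefl k)
  omega

lemma na_base : ∀ M, NA 0 M = NC 0 M := by
  intro M
  rcases Nat.eq_zero_or_pos M with rfl | hM
  · have h1 : NA 0 0 = 1 := by
      haveI : Nonempty {τ : Equiv.Perm (Fin 1) // Pc τ ∧ stat τ = 0} :=
        ⟨⟨1, pc_base _, stat_base _⟩⟩
      haveI : Subsingleton {τ : Equiv.Perm (Fin 1) // Pc τ ∧ stat τ = 0} :=
        ⟨fun a b => Subtype.ext (by
          ext i
          have : (a.1 : Fin 1 → Fin 1) i = b.1 i := Subsingleton.elim _ _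
          exact congrArg Fin.val this)⟩
      exact Nat.card_unique
    have h2 : NC 0 0 = 1 := by
      haveI : Nonempty {w : Fin 0 → Letter // IsCodeWord w ∧ lastSt w = 0} :=
        ⟨⟨fun i => i.elim0, ⟨fun i => i.elim0, fun i => i.elim0⟩, lastSt_zero _⟩⟩
      haveI : Subsingleton {w : Fin 0 → Letter // IsCodeWord w ∧ lastSt w = 0} :=
        ⟨fun a b => Subtype.ext (funext fun i => i.elim0)⟩
      exact Nat.card_unique
    rw [h1, h2]
  · have h1 : NA 0 M = 0 :=
      @Nat.card_of_isEmpty _ ⟨fun x => by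
        have := stat_base x.1
        have := x.2.2
        omega⟩
    have h2 : NC 0 M = 0 :=
      @Nat.card_of_isEmpty _ ⟨fun x => by
        have := lastSt_zero x.1
        have := x.2.2
        omega⟩
    rw [h1, h2]

lemma na_eq_nc : ∀ m M, NA m M = NC m M := by
  intro m
  induction m with
  | zero => exact na_base
  | succ m ih =>
    have cih : ∀ X, CNA m X = CNC m X := by
      intro X
      induction X with
      | zero => rw [cna_zero, cnc_zero, ih]
      | succ X ihX => rw [cna_succ, cnc_succ, ihX, ih]
    intro M
    match M with
    | 0 => rw [na_step_zero, nc_step_zero, ih]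
    | 1 => rw [na_one, nc_one]
    | (M + 2) =>
      by_cases hM : M + 2 ≤ m + 1
      · rw [na_step_two m (M + 2) (by omega) hM, nc_step_two m (M + 2) (by omega) hM,
          cnc_succ m (M + 1)]
        show CNA m (M + 1) + NA m (M + 2) = CNC m (M + 1) + NC m (M + 2)
        rw [cih, ih]
      · rw [na_big (m + 1) _ (by omega), nc_big (m + 1) _ (by omega)]

lemma cna_eq_cnc (m X : ℕ) : CNA m X = CNC m X := by
  induction X with
  | zero => rw [cna_zero, cnc_zero, na_eq_nc]
  | succ X ihX => rw [cna_succ, cnc_succ, ihX, na_eq_nc]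

lemma total (m : ℕ) :
    Nat.card {τ : Equiv.Perm (Fin (m + 1)) // Pc τ} =
    Nat.card {w : Fin m → Letter // IsCodeWord w} := by
  have h1 : Nat.card {τ : Equiv.Perm (Fin (m + 1)) // Pc τ} = CNA m m :=
    Nat.card_congr (Equiv.subtypeEquivRight fun τ =>
      ⟨fun h => ⟨h, stat_lt_self τ⟩, And.left⟩)
  have h2 : Nat.card {w : Fin m → Letter // IsCodeWord w} = CNC m m :=
    Nat.card_congr (Equiv.subtypeEquivRight fun w =>
      ⟨fun h => ⟨h, by rcases nc_state w h with h' | h' <;> omega⟩, And.left⟩)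
  rw [h1, h2, cna_eq_cnc]

theorem stmt8 (n : ℕ) (hn : 1 ≤ n) :
    Nonempty (
      {τ : Equiv.Perm (Fin n) //
        AvoidsPat τ ![2,4,3,1] ∧ AvoidsPat τ ![4,2,3,1] ∧
        AvoidsPat τ ![1,4,3,2] ∧ AvoidsPat τ ![4,1,3,2]} ≃
      {w : Fin (n - 1) → Letter // IsCodeWord w}) := by
  obtain ⟨m, rfl⟩ : ∃ m, n = m + 1 := ⟨n - 1, by omega⟩
  have e1 : {τ : Equiv.Perm (Fin (m + 1)) //
      AvoidsPat τ ![2,4,3,1] ∧ AvoidsPat τ ![4,2,3,1] ∧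
      AvoidsPat τ ![1,4,3,2] ∧ AvoidsPat τ ![4,1,3,2]} ≃
      {τ : Equiv.Perm (Fin (m + 1)) // Pc τ} :=
    Equiv.subtypeEquivRight fun τ => avoids_iff_pc τ
  obtain ⟨e2⟩ := Finite.card_eq.1 (total m)
  exact ⟨e1.trans e2⟩
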